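/- Correctness of blind delegated measurements: Let n ≥ 1, let ρ be a 2^n × 2^n complex matrix (indexed by Fin n → Fin 2), let a, r, a', r' : Fin n → Fin 2 (viewed as bit strings), let C be a 2^n × 2^n unitary, and suppose there is c ∈ ℂ with |c| = 1 such that C · X^a Z^r = c · X^{a'} Z^{r'} · C (i.e. the Clifford C maps the encryption Pauli X^a Z^r to X^{a'} Z^{r'} up to phase). Then for every outcome string x : Fin n → Fin 2, the decoded measurement probability equals the unencrypted one: e_{x ⊕ a'}ᴴ · C · (X^a Z^r) · ρ · (X^a Z^r)ᴴ · Cᴴ · e_{x ⊕ a'} = e_xᴴ · C · ρ · Cᴴ · e_x, where e_y is the computational basis vector at y and x ⊕ a' is the bitwise XOR. -/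

import Mathlib

open Matrix Finset

/-- The `n`-qubit Pauli `X^a` for a bit string `a`: the permutation matrix sending
the basis vector `e_y` to `e_{y ⊕ a}`. -/
noncomputable def Xstring (n : ℕ) (a : Fin n → Fin 2) :
    Matrix (Fin n → Fin 2) (Fin n → Fin 2) ℂ :=
  fun x y => if x = (fun i => y i + a i) then 1 else 0

/-- The `n`-qubit Pauli `Z^r` for a bit string `r`: the diagonal matrix with entry
`(−1)^{r·x}` at basis vector `e_x`. -/
noncomputable def Zstring (n : ℕ) (r : Fin n → Fin 2) :
    Matrix (Fin n → Fin 2) (Fin n → Fin 2) ℂ :=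
  Matrix.diagonal (fun x => ∏ i, (-1 : ℂ) ^ ((r i : ℕ) * (x i : ℕ)))

lemma Xstring_mul {n : ℕ} (a : Fin n → Fin 2)
    (N : Matrix (Fin n → Fin 2) (Fin n → Fin 2) ℂ) (u v : Fin n → Fin 2) :
    (Xstring n a * N) u v = N (fun i => u i + a i) v := by
  have key : ∀ x y z : Fin 2, x = y + z → y = x + z := by decide
  rw [Matrix.mul_apply, Finset.sum_eq_single (fun i => u i + a i)]
  · rw [Xstring, if_pos, one_mul]
    funext i
    exact key _ _ _ rfl
  · intro w _ hw
    rw [Xstring, if_neg, zero_mul]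
    intro h
    exact hw (funext fun i => key _ _ _ (congrFun h i))
  · intro h; exact absurd (Finset.mem_univ _) h

lemma mul_XstringH {n : ℕ} (a : Fin n → Fin 2)
    (N : Matrix (Fin n → Fin 2) (Fin n → Fin 2) ℂ) (u v : Fin n → Fin 2) :
    (N * (Xstring n a)ᴴ) u v = N u (fun i => v i + a i) := by
  rw [Matrix.mul_apply, Finset.sum_eq_single (fun i => v i + a i)]
  · rw [Matrix.conjTranspose_apply, Xstring, if_pos, star_one, mul_one]
    funext i
    have : ∀ x y : Fin 2, x + y + y = x := by decide
    exact (this (v i) (a i)).symm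
  · intro w _ hw
    rw [Matrix.conjTranspose_apply, Xstring, if_neg, star_zero, mul_zero]
    intro h
    exact hw (congrArg (fun f i => f i + a i) h ▸ by
      funext i
      have : ∀ x y : Fin 2, x + y + y = x := by decide
      exact (this (w i) (a i)).symm)
  · intro h; exact absurd (Finset.mem_univ _) h

theorem blind_measurements_correct (n : ℕ) (hn : 1 ≤ n)
    (ρ C : Matrix (Fin n → Fin 2) (Fin n → Fin 2) ℂ)
    (hC : C ∈ Matrix.unitaryGroup (Fin n → Fin 2) ℂ)
    (a r a' r' : Fin n → Fin 2) (c : ℂ) (hc : ‖c‖ = 1)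
    (hcomm : C * (Xstring n a * Zstring n r)
        = c • ((Xstring n a' * Zstring n r') * C)) :
    ∀ x : Fin n → Fin 2,
      (C * (Xstring n a * Zstring n r) * ρ * (Xstring n a * Zstring n r)ᴴ * Cᴴ)
          (fun i => x i + a' i) (fun i => x i + a' i)
        = (C * ρ * Cᴴ) x x := by
  intro x
  set B := Xstring n a' * Zstring n r' with hB
  have hcc : c * star c = 1 := by
    rw [Complex.star_def, Complex.mul_conj, Complex.normSq_eq_norm_sq, hc]
    norm_num
  have key : C * (Xstring n a * Zstring n r) * ρ * (Xstring n a * Zstring n r)ᴴ * Cᴴ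
      = B * (C * ρ * Cᴴ) * Bᴴ := by
    calc C * (Xstring n a * Zstring n r) * ρ * (Xstring n a * Zstring n r)ᴴ * Cᴴ
        = (C * (Xstring n a * Zstring n r)) * ρ * (C * (Xstring n a * Zstring n r))ᴴ := by
          simp only [Matrix.conjTranspose_mul, Matrix.mul_assoc]
      _ = (c • (B * C)) * ρ * (c • (B * C))ᴴ := by rw [hcomm]
      _ = (c * star c) • ((B * C) * ρ * (B * C)ᴴ) := by
          rw [Matrix.conjTranspose_smul, Matrix.smul_mul, Matrix.smul_mul,
            Matrix.mul_smul, smul_smul]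
      _ = B * (C * ρ * Cᴴ) * Bᴴ := by
          rw [hcc, one_smul]; simp only [Matrix.conjTranspose_mul, Matrix.mul_assoc]
  rw [key]
  have hxx : (fun i => (fun j => x j + a' j) i + a' i) = x := by
    funext i
    have : ∀ x y : Fin 2, x + y + y = x := by decide
    exact this (x i) (a' i)
  have e1 : B * (C * ρ * Cᴴ) * Bᴴ
      = Xstring n a' * (Zstring n r' * (C * ρ * Cᴴ) * (Zstring n r')ᴴ * (Xstring n a')ᴴ) := by
    rw [hB, Matrix.conjTranspose_mul]
    simp only [Matrix.mul_assoc]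
  rw [e1, Xstring_mul, hxx, mul_XstringH, hxx]
  rw [Zstring, Matrix.diagonal_conjTranspose, Matrix.mul_diagonal, Matrix.diagonal_mul]
  have hz : (∏ i, (-1 : ℂ) ^ ((r' i : ℕ) * (x i : ℕ))) *
      star (∏ i, (-1 : ℂ) ^ ((r' i : ℕ) * (x i : ℕ))) = 1 := by
    rw [star_prod]
    rw [← Finset.prod_mul_distrib]
    apply Finset.prod_eq_one
    intro i _
    rw [star_pow, star_neg, star_one, ← pow_add]
    exact Even.neg_one_pow ⟨_, rfl⟩
  simp only [Pi.star_apply]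
  rw [mul_comm _ ((C * ρ * Cᴴ) x x), mul_assoc, hz, mul_one]
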